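/- Let n ∈ ℕ, n ≥ 1, let h̄ ∈ ℕ, h̄ ≥ 1, let t : ℕ → ℕ be a sampling sequence whose sampling intervals satisfy 1 ≤ h_k ≤ h̄ for all k, let y : ℕ → ℝ^n be any signal and e = Δy. Then for every T ∈ ℕ, Σ_{s=0}^{T} ‖e(s)‖² ≤ λmax(E_{h̄}) · Σ_{s=0}^{T} ‖y(s)‖², where ‖·‖ is the Euclidean norm. -/

import Mathlib

open Matrix Finset

/-- The `h × h` matrix with entries `min i j` (zero-based indices). -/
noncomputable def Emat (h : ℕ) : Matrix (Fin h) (Fin h) ℝ :=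
  fun i j => (min (i : ℕ) (j : ℕ) : ℝ)

lemma Emat_isHermitian (h : ℕ) : (Emat h).IsHermitian := by
  ext i j
  simp [Emat, Matrix.conjTranspose_apply, min_comm]

/-- The largest eigenvalue of `Emat h`. -/
noncomputable def lamMax (h : ℕ) : ℝ := ⨆ i, (Emat_isHermitian h).eigenvalues i

open scoped RealInnerProductSpace

set_option maxHeartbeats 1000000 in
lemma rayleigh (h : ℕ) (v : EuclideanSpace ℝ (Fin h)) :
    ⟪v, Matrix.toEuclideanLin (Emat h) v⟫ ≤ lamMax h * ⟪v, v⟫ := by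
  classical
  have hsymm := (Matrix.isHermitian_iff_isSymmetric.1 (Emat_isHermitian h))
  have hLb : ∀ i, Matrix.toEuclideanLin (Emat h) ((Emat_isHermitian h).eigenvectorBasis i)
      = (Emat_isHermitian h).eigenvalues i • (Emat_isHermitian h).eigenvectorBasis i := by
    intro i
    have h2 := (Emat_isHermitian h).mulVec_eigenvectorBasis i
    ext c
    have := congrFun h2 c
    simpa [Matrix.toEuclideanLin_apply] using this
  set b := (Emat_isHermitian h).eigenvectorBasis with hb
  have key : ⟪v, Matrix.toEuclideanLin (Emat h) v⟫
      = ∑ i, (Emat_isHermitian h).eigenvalues i * ⟪b i, v⟫ ^ 2 := by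
    rw [← b.sum_inner_mul_inner v (Matrix.toEuclideanLin (Emat h) v)]
    refine Finset.sum_congr rfl fun i _ => ?_
    have hi : ⟪b i, Matrix.toEuclideanLin (Emat h) v⟫
        = ⟪Matrix.toEuclideanLin (Emat h) (b i), v⟫ := (hsymm (b i) v).symm
    rw [hi, hLb i, real_inner_smul_left, real_inner_comm v (b i)]
    ring
  have hnorm : ∑ i, ⟪b i, v⟫ ^ 2 = ⟪v, v⟫ := by
    rw [← b.sum_inner_mul_inner v v]
    refine Finset.sum_congr rfl fun i _ => ?_
    rw [real_inner_comm v (b i)]; ring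
  rw [key, ← hnorm, Finset.mul_sum]
  refine Finset.sum_le_sum fun i _ => ?_
  exact mul_le_mul_of_nonneg_right
    (le_ciSup (Set.Finite.bddAbove (Set.finite_range _)) i) (sq_nonneg _)

lemma rayleigh' (h : ℕ) (v : Fin h → ℝ) :
    ∑ i, ∑ j, Emat h i j * (v i * v j) ≤ lamMax h * ∑ i, v i ^ 2 := by
  have H := rayleigh h ((WithLp.equiv 2 (Fin h → ℝ)).symm v)
  simp only [PiLp.inner_apply, RCLike.inner_apply, conj_trivial,
    Matrix.toEuclideanLin_apply,
    Matrix.mulVec, dotProduct] at H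
  calc ∑ i, ∑ j, Emat h i j * (v i * v j)
      = ∑ i, v i * ∑ j, Emat h i j * v j := by
        refine Finset.sum_congr rfl fun i _ => ?_
        rw [Finset.mul_sum]
        exact Finset.sum_congr rfl fun j _ => by ring
    _ ≤ lamMax h * ∑ i, v i * v i := by simpa [WithLp.equiv, dotProduct, mul_comm] using H
    _ = lamMax h * ∑ i, v i ^ 2 := by
        congr 1; exact Finset.sum_congr rfl fun i _ => by ring

lemma sum_extend {l h : ℕ} (hlh : l ≤ h) (f : Fin h → ℝ)
    (hf : ∀ j : Fin h, l ≤ (j : ℕ) → f j = 0) :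
    ∑ j, f j = ∑ i : Fin l, f (Fin.castLE hlh i) := by
  have : ∑ i : Fin l, f (Fin.castLE hlh i) = ∑ x ∈ Finset.univ.map (Fin.castLEEmb hlh), f x := by
    rw [Finset.sum_map]; rfl
  rw [this]
  refine (Finset.sum_subset (Finset.subset_univ _) fun x _ hx => ?_).symm
  refine hf x ?_
  by_contra hc
  push_neg at hc
  exact hx (by simp [Fin.castLEEmb]; exact ⟨⟨x, hc⟩, by simp [Fin.castLE]⟩)

lemma lamMax_nonneg (h : ℕ) (hh : 1 ≤ h) : 0 ≤ lamMax h := by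
  have k : Fin h := ⟨0, hh⟩
  have H := rayleigh' h (fun i => if i = k then (1:ℝ) else 0)
  simp only [mul_ite, ite_mul, one_mul, mul_one, mul_zero, zero_mul,
    Finset.sum_ite_eq', Finset.mem_univ, if_true] at H
  have h2 : ∑ i : Fin h, (if i = k then (1:ℝ) else 0) ^ 2 = 1 := by
    simp [ite_pow]
  rw [h2, mul_one] at H
  refine le_trans ?_ H
  simp [Emat]

lemma lamMax_mono {l h : ℕ} (hl : 1 ≤ l) (hlh : l ≤ h) : lamMax l ≤ lamMax h := by
  classical
  haveI : Nonempty (Fin l) := ⟨⟨0, hl⟩⟩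
  obtain ⟨i0, hi0⟩ := exists_eq_ciSup_of_finite (f := (Emat_isHermitian l).eigenvalues)
  set u : EuclideanSpace ℝ (Fin l) := (Emat_isHermitian l).eigenvectorBasis i0 with hu
  have hmv := (Emat_isHermitian l).mulVec_eigenvectorBasis i0
  have hrow : ∀ i : Fin l, ∑ j, Emat l i j * u j
      = (Emat_isHermitian l).eigenvalues i0 * u i := by
    intro i
    have := congrFun hmv i
    simpa [Matrix.mulVec, dotProduct] using this
  have hnu : ∑ i, u i ^ 2 = 1 := by
    have h1 : ‖u‖ = 1 := (Emat_isHermitian l).eigenvectorBasis.orthonormal.1 i0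
    have h2 : (⟪u, u⟫ : ℝ) = 1 := by
      rw [real_inner_self_eq_norm_sq, h1]; norm_num
    rw [← h2, PiLp.inner_apply]
    exact Finset.sum_congr rfl fun i _ => by simp
  have hq : ∑ i, ∑ j, Emat l i j * (u i * u j)
      = (Emat_isHermitian l).eigenvalues i0 := by
    calc ∑ i, ∑ j, Emat l i j * (u i * u j)
        = ∑ i, u i * ∑ j, Emat l i j * u j := by
          refine Finset.sum_congr rfl fun i _ => ?_
          rw [Finset.mul_sum]; exact Finset.sum_congr rfl fun j _ => by ring
      _ = (Emat_isHermitian l).eigenvalues i0 * ∑ i, u i ^ 2 := by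
          rw [Finset.mul_sum]
          refine Finset.sum_congr rfl fun i _ => ?_
          rw [hrow i]; ring
      _ = _ := by rw [hnu, mul_one]
  -- extend u by zeros
  set w : Fin h → ℝ := fun j => if hj : (j : ℕ) < l then u ⟨j, hj⟩ else 0 with hw
  have hwz : ∀ j : Fin h, l ≤ (j : ℕ) → w j = 0 := fun j hj => by
    simp [hw, Nat.not_lt_of_le hj]
  have hwcast : ∀ i : Fin l, w (Fin.castLE hlh i) = u i := fun i => by
    simp [hw, i.isLt]
  have claim2 : ∑ j, w j ^ 2 = ∑ i, u i ^ 2 := by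
    rw [sum_extend hlh (fun j => w j ^ 2) (fun j hj => by simp [hwz j hj])]
    exact Finset.sum_congr rfl fun i _ => by rw [hwcast]
  have claim1 : ∑ i, ∑ j, Emat h i j * (w i * w j)
      = ∑ i, ∑ j, Emat l i j * (u i * u j) := by
    rw [sum_extend hlh _ (fun i hi => by
      refine Finset.sum_eq_zero fun j _ => ?_
      simp [hwz i hi])]
    refine Finset.sum_congr rfl fun i _ => ?_
    rw [sum_extend hlh _ (fun j hj => by simp [hwz j hj])]
    refine Finset.sum_congr rfl fun j _ => ?_
    rw [hwcast, hwcast]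
    congr 1
  have H := rayleigh' h w
  rw [claim1, claim2, hq, hnu, mul_one] at H
  rw [lamMax, ← hi0]
  exact H

set_option maxHeartbeats 1000000 in
lemma core (n l : ℕ) (x : ℕ → EuclideanSpace ℝ (Fin n)) :
    ∑ s ∈ Finset.range l, ‖∑ i ∈ Finset.range s, x i‖ ^ 2
      ≤ lamMax l * ∑ i ∈ Finset.range l, ‖x i‖ ^ 2 := by
  classical
  have e1 : ∀ s : ℕ, ‖∑ i ∈ Finset.range s, x i‖ ^ 2
      = ∑ i ∈ Finset.range s, ∑ j ∈ Finset.range s, ⟪x i, x j⟫ := by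
    intro s
    rw [← real_inner_self_eq_norm_sq, sum_inner]
    exact Finset.sum_congr rfl fun i _ => inner_sum _ _ _
  have step1 : ∑ s ∈ Finset.range l, ‖∑ i ∈ Finset.range s, x i‖ ^ 2
      = ∑ i ∈ Finset.range l, ∑ j ∈ Finset.range l,
          ((l - (max i j + 1) : ℕ) : ℝ) * ⟪x i, x j⟫ := by
    have e2 : ∀ s ∈ Finset.range l, ‖∑ i ∈ Finset.range s, x i‖ ^ 2
        = ∑ i ∈ Finset.range l, ∑ j ∈ Finset.range l,
            (if i < s then (if j < s then ⟪x i, x j⟫ else 0) else 0) := by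
      intro s hs
      rw [Finset.mem_range] at hs
      have hr : Finset.range s = (Finset.range l).filter (· < s) := by
        ext a; simp [Finset.mem_filter, Finset.mem_range]; omega
      rw [e1, hr, Finset.sum_filter]
      refine Finset.sum_congr rfl fun i _ => ?_
      by_cases hi : i < s
      · simp only [hi, if_true]
        rw [Finset.sum_filter]
      · simp [hi]
    rw [Finset.sum_congr rfl e2, Finset.sum_comm]
    refine Finset.sum_congr rfl fun i _ => ?_
    rw [Finset.sum_comm]
    refine Finset.sum_congr rfl fun j hj => ?_
    have : ∀ s : ℕ, (if i < s then (if j < s then ⟪x i, x j⟫ else 0) else 0)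
        = if i < s ∧ j < s then ⟪x i, x j⟫ else 0 := fun s => (ite_and _ _ _ _).symm
    rw [Finset.sum_congr rfl fun s _ => this s, ← Finset.sum_filter]
    rw [Finset.sum_const]
    have hfil : ((Finset.range l).filter fun s => i < s ∧ j < s)
        = Finset.Ico (max i j + 1) l := by
      ext a; simp [Finset.mem_filter, Finset.mem_range, Finset.mem_Ico]; omega
    rw [hfil, Nat.card_Ico, nsmul_eq_mul]
  rw [step1]
  -- convert to Fin l sums and reverse the index
  rw [Finset.sum_range fun i => _]
  simp_rw [Finset.sum_range fun j => _]
  have step2 : ∑ i : Fin l, ∑ j : Fin l,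
        ((l - (max (i : ℕ) (j : ℕ) + 1) : ℕ) : ℝ) * ⟪x i, x j⟫
      = ∑ i : Fin l, ∑ j : Fin l, Emat l i j * ⟪x (i.rev : ℕ), x (j.rev : ℕ)⟫ := by
    rw [← Equiv.sum_comp (Fin.revPerm (n := l))
      (fun i : Fin l => ∑ j : Fin l, ((l - (max (i : ℕ) (j : ℕ) + 1) : ℕ) : ℝ) * ⟪x i, x j⟫)]
    refine Finset.sum_congr rfl fun i _ => ?_
    rw [← Equiv.sum_comp (Fin.revPerm (n := l))
      (fun j : Fin l => ((l - (max ((Fin.revPerm i : Fin l) : ℕ) (j : ℕ) + 1) : ℕ) : ℝ)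
        * ⟪x (Fin.revPerm i : Fin l), x j⟫)]
    refine Finset.sum_congr rfl fun j _ => ?_
    have hmin : (l - (max ((i.rev : Fin l) : ℕ) ((j.rev : Fin l) : ℕ) + 1) : ℕ)
        = min (i : ℕ) (j : ℕ) := by
      have hi := i.isLt; have hj := j.isLt
      have h1 : ((i.rev : Fin l) : ℕ) = l - 1 - (i : ℕ) := by rw [Fin.val_rev]; omega
      have h2 : ((j.rev : Fin l) : ℕ) = l - 1 - (j : ℕ) := by rw [Fin.val_rev]; omega
      rw [h1, h2]; omega
    simp only [Fin.revPerm_apply]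
    rw [hmin]
    congr 1
    simp [Emat]
  rw [step2]
  -- per coordinate Rayleigh bound
  set w : Fin l → EuclideanSpace ℝ (Fin n) := fun i => x (i.rev : ℕ) with hwdef
  have step3 : ∑ i : Fin l, ∑ j : Fin l, Emat l i j * ⟪w i, w j⟫
      = ∑ c : Fin n, ∑ i : Fin l, ∑ j : Fin l, Emat l i j * (w i c * w j c) := by
    calc ∑ i : Fin l, ∑ j : Fin l, Emat l i j * ⟪w i, w j⟫
        = ∑ i : Fin l, ∑ j : Fin l, ∑ c : Fin n, Emat l i j * (w i c * w j c) := by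
          refine Finset.sum_congr rfl fun i _ => Finset.sum_congr rfl fun j _ => ?_
          rw [PiLp.inner_apply]
          simp only [RCLike.inner_apply, conj_trivial]
          rw [Finset.mul_sum]
          exact Finset.sum_congr rfl fun c _ => by ring
      _ = ∑ i : Fin l, ∑ c : Fin n, ∑ j : Fin l, Emat l i j * (w i c * w j c) := by
          exact Finset.sum_congr rfl fun i _ => Finset.sum_comm
      _ = ∑ c : Fin n, ∑ i : Fin l, ∑ j : Fin l, Emat l i j * (w i c * w j c) :=
          Finset.sum_comm
  rw [step3]
  have step4 : ∑ c : Fin n, ∑ i : Fin l, ∑ j : Fin l, Emat l i j * (w i c * w j c)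
      ≤ ∑ c : Fin n, lamMax l * ∑ i : Fin l, (w i c) ^ 2 :=
    Finset.sum_le_sum fun c _ => rayleigh' l (fun i => w i c)
  refine le_trans step4 (le_of_eq ?_)
  rw [← Finset.mul_sum]
  congr 1
  rw [Finset.sum_comm]
  rw [← Equiv.sum_comp (Fin.revPerm (n := l)) (fun i : Fin l => ‖x (i : ℕ)‖ ^ 2)]
  refine Finset.sum_congr rfl fun i _ => ?_
  have : ‖w i‖ ^ 2 = ∑ c : Fin n, (w i c) ^ 2 := by
    rw [← real_inner_self_eq_norm_sq, PiLp.inner_apply]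
    simp only [RCLike.inner_apply, conj_trivial]
    exact Finset.sum_congr rfl fun c _ => (sq _).symm
  rw [← this]
  rfl

lemma block (n a b : ℕ) (hab : a ≤ b) (x : ℕ → EuclideanSpace ℝ (Fin n)) :
    ∑ s ∈ Finset.Ico a b, ‖∑ i ∈ Finset.Ico a s, x i‖ ^ 2
      ≤ lamMax (b - a) * ∑ i ∈ Finset.Ico a b, ‖x i‖ ^ 2 := by
  have h1 := core n (b - a) (fun i => x (a + i))
  calc ∑ s ∈ Finset.Ico a b, ‖∑ i ∈ Finset.Ico a s, x i‖ ^ 2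
      = ∑ s ∈ Finset.range (b - a), ‖∑ i ∈ Finset.Ico a (a + s), x i‖ ^ 2 :=
        Finset.sum_Ico_eq_sum_range _ _ _
    _ = ∑ s ∈ Finset.range (b - a), ‖∑ i ∈ Finset.range s, x (a + i)‖ ^ 2 := by
        refine Finset.sum_congr rfl fun s _ => ?_
        congr 1
        rw [Finset.sum_Ico_eq_sum_range]
        simp
    _ ≤ lamMax (b - a) * ∑ i ∈ Finset.range (b - a), ‖x (a + i)‖ ^ 2 := h1
    _ = lamMax (b - a) * ∑ i ∈ Finset.Ico a b, ‖x i‖ ^ 2 := by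
        rw [Finset.sum_Ico_eq_sum_range]

/-- ℓ₂ gain bound for the delay operator: for any sampling sequence whose sampling
intervals satisfy `1 ≤ t (k+1) - t k ≤ h̄`, any signal `y` and `e = Δ y`, the truncated
energy of `e` is bounded by `λmax(E_h̄)` times that of `y`. -/
theorem delay_operator_l2_gain_bound
    (n : ℕ) (hn : 1 ≤ n) (hbar : ℕ) (hhbar : 1 ≤ hbar)
    (t : ℕ → ℕ) (ht : StrictMono t) (ht0 : t 0 = 0)
    (hint : ∀ k : ℕ, 1 ≤ t (k + 1) - t k ∧ t (k + 1) - t k ≤ hbar)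
    (y e : ℕ → EuclideanSpace ℝ (Fin n))
    (he : ∀ k s : ℕ, t k ≤ s → s < t (k + 1) →
      e s = ∑ i ∈ Finset.Ico (t k) s, y i) :
    ∀ T : ℕ, ∑ s ∈ Finset.range (T + 1), ‖e s‖ ^ 2
      ≤ lamMax hbar * ∑ s ∈ Finset.range (T + 1), ‖y s‖ ^ 2 := by
  classical
  have main : ∀ N : ℕ, ∑ s ∈ Finset.range N, ‖e s‖ ^ 2
      ≤ lamMax hbar * ∑ s ∈ Finset.range N, ‖y s‖ ^ 2 := by
    intro N
    induction N using Nat.strong_induction_on with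
    | _ N IH =>
      rcases Nat.eq_zero_or_pos N with h0 | hN
      · subst h0; simp
      · set k := Nat.findGreatest (fun k => t k < N) N with hk
        have hk1 : t k < N := by
          exact Nat.findGreatest_spec (P := fun k => t k < N) (Nat.zero_le N)
            (by simpa [ht0] using hN)
        have hk2 : N ≤ t (k + 1) := by
          by_contra hc
          push_neg at hc
          have hle : k + 1 ≤ N := le_trans (ht.le_apply : k + 1 ≤ t (k + 1)) (le_of_lt hc)
          exact Nat.findGreatest_is_greatest (P := fun k => t k < N)
            (Nat.lt_succ_self k) hle hc
        have hsplit : ∀ f : ℕ → ℝ, ∑ s ∈ Finset.range N, f s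
            = ∑ s ∈ Finset.range (t k), f s + ∑ s ∈ Finset.Ico (t k) N, f s := by
          intro f
          simp only [Finset.range_eq_Ico]
          exact (Finset.sum_Ico_consecutive f (Nat.zero_le _) (le_of_lt hk1)).symm
        have IH' := IH (t k) hk1
        have hblock : ∑ s ∈ Finset.Ico (t k) N, ‖e s‖ ^ 2
            ≤ lamMax hbar * ∑ s ∈ Finset.Ico (t k) N, ‖y s‖ ^ 2 := by
          have heq : ∀ s ∈ Finset.Ico (t k) N,
              ‖e s‖ ^ 2 = ‖∑ i ∈ Finset.Ico (t k) s, y i‖ ^ 2 := by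
            intro s hs
            rw [Finset.mem_Ico] at hs
            rw [he k s hs.1 (lt_of_lt_of_le hs.2 hk2)]
          rw [Finset.sum_congr rfl heq]
          refine le_trans (block n (t k) N (le_of_lt hk1) y) ?_
          refine mul_le_mul_of_nonneg_right ?_ ?_
          · refine lamMax_mono (by omega) ?_
            have h1 : N - t k ≤ t (k + 1) - t k := by omega
            exact le_trans h1 (hint k).2
          · exact Finset.sum_nonneg fun i _ => sq_nonneg _
        rw [hsplit (fun s => ‖e s‖ ^ 2), hsplit (fun s => ‖y s‖ ^ 2), mul_add]
        exact add_le_add IH' hblock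
  intro T
  exact main (T + 1)
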